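/- (Rayleigh–Taylor quantity formulas.) For the two-phase Muskat problem, define $\mathrm{RT}(x,t) = (\nabla_{x,y}p^+ - \nabla_{x,y}p^-)\cdot n|_{\Sigma_t}$. Then (i) $\mathrm{RT} = (1+|\nabla\eta|^2)^{1/2}\big(\llbracket\rho\rrbracket - \llbracket B\rrbracket\big)$, where $\llbracket\rho\rrbracket = \rho^- - \rho^+$, $\llbracket B\rrbracket = B^- - B^+$, and $B^\pm = \frac{\nabla\eta\cdot\nabla f^\pm + G^\pm(\eta)f^\pm}{1+|\nabla\eta|^2}$ with $f^\pm = p^\pm|_\Sigma + \rho^\pm\eta$; and (ii) using Darcy's law, $\mathrm{RT} = \llbracket\rho\rrbracket(1+|\nabla\eta|^2)^{-1/2} + \llbracket\mu\rrbracket\, u\cdot n$ with $\llbracket\mu\rrbracket = \mu^- - \mu^+$. -/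

import Mathlib

open MeasureTheory
open scoped ENNReal

noncomputable section

/-- The point `(x, t) ∈ ℝ^{d+1} = ℝ^d × ℝ`. -/
def liftPt {d : ℕ} (x : EuclideanSpace ℝ (Fin d)) (t : ℝ) :
    EuclideanSpace ℝ (Fin (d + 1)) :=
  (WithLp.equiv 2 (Fin (d + 1) → ℝ)).symm (Fin.snoc (fun i => x i) t)

/-- The vertical coordinate `y` of a point `p ∈ ℝ^{d+1}`. -/
def ycoord {d : ℕ} (p : EuclideanSpace ℝ (Fin (d + 1))) : ℝ := p (Fin.last d)

/-- The (non-normalized) upward normal `(-∇η(x), 1)` to the graph of `η`. -/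
def nvec {d : ℕ} (η : EuclideanSpace ℝ (Fin d) → ℝ) (x : EuclideanSpace ℝ (Fin d)) :
    EuclideanSpace ℝ (Fin (d + 1)) :=
  liftPt (-(gradient η x)) 1

/-- The trace on `Σ = {y = η(x)}` of a function `q` on `ℝ^{d+1}`. -/
def surfTrace {d : ℕ} (η : EuclideanSpace ℝ (Fin d) → ℝ)
    (q : EuclideanSpace ℝ (Fin (d + 1)) → ℝ) (x : EuclideanSpace ℝ (Fin d)) : ℝ :=
  q (liftPt x (η x))

/-- `√(1+|∇η|²) ∂q/∂n |_Σ = (∂_y q - ∇η·∇_x q)(x, η(x))`, the conormal derivative. -/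
def conormAt {d : ℕ} (η : EuclideanSpace ℝ (Fin d) → ℝ)
    (q : EuclideanSpace ℝ (Fin (d + 1)) → ℝ) (x : EuclideanSpace ℝ (Fin d)) : ℝ :=
  (inner ℝ (gradient q (liftPt x (η x))) (nvec η x) : ℝ)

/-- `B = (∇η·∇f + G(η)f)/(1+|∇η|²)` computed from the harmonic extension `q` of
`f = q|_Σ`; algebraically this equals `∂_y q|_Σ`. -/
def Bcoef {d : ℕ} (η : EuclideanSpace ℝ (Fin d) → ℝ)
    (q : EuclideanSpace ℝ (Fin (d + 1)) → ℝ) (x : EuclideanSpace ℝ (Fin d)) : ℝ :=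
  ((inner ℝ (gradient η x) (gradient (surfTrace η q) x) : ℝ) + conormAt η q x) /
    (1 + ‖gradient η x‖ ^ 2)

/-- The Rayleigh–Taylor quantity `RT = (∇p⁺ - ∇p⁻)·n |_Σ`. -/
def RTq {d : ℕ} (η : EuclideanSpace ℝ (Fin d) → ℝ)
    (pPlus pMinus : EuclideanSpace ℝ (Fin (d + 1)) → ℝ)
    (x : EuclideanSpace ℝ (Fin d)) : ℝ :=
  (Real.sqrt (1 + ‖gradient η x‖ ^ 2))⁻¹ *
    (inner ℝ (gradient pPlus (liftPt x (η x)) - gradient pMinus (liftPt x (η x)))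
      (nvec η x) : ℝ)

-- auxiliary lemmas
lemma inner_grad {F : Type*} [NormedAddCommGroup F] [InnerProductSpace ℝ F]
    [CompleteSpace F] (f : F → ℝ) (z v : F) :
    (inner ℝ (gradient f z) v : ℝ) = fderiv ℝ f z v := by
  unfold gradient; exact InnerProductSpace.toDual_symm_apply

lemma inner_grad' {F : Type*} [NormedAddCommGroup F] [InnerProductSpace ℝ F]
    [CompleteSpace F] (f : F → ℝ) (z v : F) :
    (inner ℝ v (gradient f z) : ℝ) = fderiv ℝ f z v := by
  rw [real_inner_comm]; exact inner_grad f z v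

lemma liftPt_last {d : ℕ} (x : EuclideanSpace ℝ (Fin d)) (t : ℝ) :
    liftPt x t (Fin.last d) = t := by
  simp [liftPt]

lemma nvec_last {d : ℕ} (η : EuclideanSpace ℝ (Fin d) → ℝ) (x : EuclideanSpace ℝ (Fin d)) :
    nvec η x (Fin.last d) = 1 := liftPt_last _ _

lemma inner_e {d : ℕ} (v : EuclideanSpace ℝ (Fin (d + 1))) :
    (inner ℝ (liftPt (0 : EuclideanSpace ℝ (Fin d)) 1) v : ℝ) = v (Fin.last d) := by
  simp [liftPt, PiLp.inner_apply, Fin.sum_univ_castSucc]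

lemma ycoord_diff {d : ℕ} : Differentiable ℝ (ycoord (d := d)) :=
  (EuclideanSpace.proj (𝕜 := ℝ) (Fin.last d)).differentiable

lemma fderiv_ycoord {d : ℕ} (z : EuclideanSpace ℝ (Fin (d + 1))) :
    fderiv ℝ (ycoord (d := d)) z = EuclideanSpace.proj (𝕜 := ℝ) (Fin.last d) :=
  (EuclideanSpace.proj (𝕜 := ℝ) (Fin.last d)).fderiv

lemma liftMap_diff {d : ℕ} (η : EuclideanSpace ℝ (Fin d) → ℝ) (hη : Differentiable ℝ η) :
    Differentiable ℝ (fun x => liftPt x (η x)) := by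
  have h : (fun x => liftPt x (η x)) =
      ⇑(PiLp.continuousLinearEquiv 2 ℝ (fun _ : Fin (d+1) => ℝ)).symm ∘
        (fun x => (Fin.snoc (fun i => x i) (η x) : Fin (d+1) → ℝ)) := rfl
  rw [h]
  refine (((PiLp.continuousLinearEquiv 2 ℝ (fun _ : Fin (d+1) => ℝ)).symm).differentiable).comp
    (differentiable_pi.mpr ?_)
  intro j
  induction j using Fin.lastCases with
  | last => simpa using hη
  | cast i =>
      simp only [Fin.snoc_castSucc]
      exact (EuclideanSpace.proj (𝕜 := ℝ) i).differentiable

/-- Rayleigh–Taylor quantity formulas: with pressures `p^±`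
continuous across the interface and satisfying Darcy's law, and with
`f^± = p^±|_Σ + ρ^± η`, `B^± = (∇η·∇f^± + G^±(η)f^±)/(1+|∇η|²)` (computed via the
extensions `q^± = p^± + ρ^± y`), one has
(i) `RT = √(1+|∇η|²)(⟦ρ⟧ - ⟦B⟧)` and
(ii) `RT = ⟦ρ⟧(1+|∇η|²)^{-1/2} + ⟦μ⟧ u·n`. -/
theorem stmt_11 (d : ℕ) (ρPlus ρMinus μPlus μMinus : ℝ)
    (η : EuclideanSpace ℝ (Fin d) → ℝ) (hη : Differentiable ℝ η)
    (pPlus pMinus : EuclideanSpace ℝ (Fin (d + 1)) → ℝ)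
    (hpP : Differentiable ℝ pPlus) (hpM : Differentiable ℝ pMinus)
    (uPlus uMinus : EuclideanSpace ℝ (Fin (d + 1)) → EuclideanSpace ℝ (Fin (d + 1)))
    -- continuity of the pressure across `Σ`
    (hcontp : ∀ x, pPlus (liftPt x (η x)) = pMinus (liftPt x (η x)))
    -- Darcy's law `μ^± u^± + ∇p^± = -(0, ρ^±)` on `Σ`
    (hDarcyP : ∀ x, μPlus • uPlus (liftPt x (η x)) + gradient pPlus (liftPt x (η x))
        = -(ρPlus • liftPt (0 : EuclideanSpace ℝ (Fin d)) 1))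
    (hDarcyM : ∀ x, μMinus • uMinus (liftPt x (η x)) + gradient pMinus (liftPt x (η x))
        = -(ρMinus • liftPt (0 : EuclideanSpace ℝ (Fin d)) 1))
    -- continuity of the normal velocity across `Σ`
    (hun : ∀ x, (inner ℝ (uPlus (liftPt x (η x))) (nvec η x) : ℝ)
        = (inner ℝ (uMinus (liftPt x (η x))) (nvec η x) : ℝ)) :
    ∀ x,
      -- (i)  `RT = √(1+|∇η|²) (⟦ρ⟧ - ⟦B⟧)`
      RTq η pPlus pMinus x
        = Real.sqrt (1 + ‖gradient η x‖ ^ 2) *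
            ((ρMinus - ρPlus) -
              (Bcoef η (fun p => pMinus p + ρMinus * ycoord p) x -
                Bcoef η (fun p => pPlus p + ρPlus * ycoord p) x)) ∧
      -- (ii) `RT = ⟦ρ⟧ (1+|∇η|²)^{-1/2} + ⟦μ⟧ u·n`
      RTq η pPlus pMinus x
        = (ρMinus - ρPlus) * (Real.sqrt (1 + ‖gradient η x‖ ^ 2))⁻¹ +
            (μMinus - μPlus) *
              ((Real.sqrt (1 + ‖gradient η x‖ ^ 2))⁻¹ *
                (inner ℝ (uMinus (liftPt x (η x))) (nvec η x) : ℝ)) := by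
  intro x
  have hDpos : (0 : ℝ) < 1 + ‖gradient η x‖ ^ 2 := by positivity
  have hs2 : Real.sqrt (1 + ‖gradient η x‖ ^ 2) ^ 2 = 1 + ‖gradient η x‖ ^ 2 :=
    Real.sq_sqrt hDpos.le
  have hsne : Real.sqrt (1 + ‖gradient η x‖ ^ 2) ≠ 0 :=
    ne_of_gt (Real.sqrt_pos.mpr hDpos)
  have hEn : (inner ℝ (liftPt (0 : EuclideanSpace ℝ (Fin d)) 1) (nvec η x) : ℝ) = 1 := by
    rw [inner_e]; exact nvec_last η x
  constructor
  · -- part (i)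
    -- conormal terms
    have hCM : conormAt η (fun p => pMinus p + ρMinus * ycoord p) x
        = fderiv ℝ pMinus (liftPt x (η x)) (nvec η x) + ρMinus := by
      unfold conormAt
      rw [inner_grad,
        fderiv_fun_add (hpM _) ((ycoord_diff _).const_mul ρMinus),
        fderiv_const_mul (ycoord_diff _) ρMinus, fderiv_ycoord]
      simp [nvec_last]
    have hCP : conormAt η (fun p => pPlus p + ρPlus * ycoord p) x
        = fderiv ℝ pPlus (liftPt x (η x)) (nvec η x) + ρPlus := by
      unfold conormAt
      rw [inner_grad,
        fderiv_fun_add (hpP _) ((ycoord_diff _).const_mul ρPlus),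
        fderiv_const_mul (ycoord_diff _) ρPlus, fderiv_ycoord]
      simp [nvec_last]
    -- surface trace relation
    have hsurf : surfTrace η (fun p => pMinus p + ρMinus * ycoord p)
        = fun x' => surfTrace η (fun p => pPlus p + ρPlus * ycoord p) x'
            + (ρMinus - ρPlus) * η x' := by
      funext x'
      show pMinus (liftPt x' (η x')) + ρMinus * ycoord (liftPt x' (η x'))
        = pPlus (liftPt x' (η x')) + ρPlus * ycoord (liftPt x' (η x'))
          + (ρMinus - ρPlus) * η x'
      have hyc : ycoord (liftPt x' (η x')) = η x' := liftPt_last _ _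
      rw [hyc, hcontp x']; ring
    have hFPdiff : Differentiable ℝ (surfTrace η (fun p => pPlus p + ρPlus * ycoord p)) :=
      (hpP.add (ycoord_diff.const_mul ρPlus)).comp (liftMap_diff η hη)
    have hfF : fderiv ℝ (surfTrace η (fun p => pMinus p + ρMinus * ycoord p)) x
        = fderiv ℝ (surfTrace η (fun p => pPlus p + ρPlus * ycoord p)) x
            + (ρMinus - ρPlus) • fderiv ℝ η x := by
      rw [hsurf, fderiv_fun_add (hFPdiff x) ((hη x).const_mul _), fderiv_const_mul (hη x)]
    have hT : (inner ℝ (gradient η x)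
          (gradient (surfTrace η (fun p => pMinus p + ρMinus * ycoord p)) x) : ℝ)
        = (inner ℝ (gradient η x)
            (gradient (surfTrace η (fun p => pPlus p + ρPlus * ycoord p)) x) : ℝ)
          + (ρMinus - ρPlus) * ‖gradient η x‖ ^ 2 := by
      have hg : fderiv ℝ η x (gradient η x) = ‖gradient η x‖ ^ 2 := by
        rw [← inner_grad, real_inner_self_eq_norm_sq]
      rw [inner_grad', inner_grad', hfF, ContinuousLinearMap.add_apply,
        ContinuousLinearMap.smul_apply, hg, smul_eq_mul]
    have hA : (inner ℝ (gradient pPlus (liftPt x (η x)) - gradient pMinus (liftPt x (η x)))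
          (nvec η x) : ℝ)
        = fderiv ℝ pPlus (liftPt x (η x)) (nvec η x)
          - fderiv ℝ pMinus (liftPt x (η x)) (nvec η x) := by
      rw [inner_sub_left, inner_grad, inner_grad]
    simp only [RTq, Bcoef]
    rw [hA, hCM, hCP, hT]
    set S := Real.sqrt (1 + ‖gradient η x‖ ^ 2) with hS
    set G2 := ‖gradient η x‖ ^ 2 with hG2def
    set TP := (inner ℝ (gradient η x)
      (gradient (surfTrace η (fun p => pPlus p + ρPlus * ycoord p)) x) : ℝ) with hTPdef
    set a := fderiv ℝ pPlus (liftPt x (η x)) (nvec η x) with ha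
    set b := fderiv ℝ pMinus (liftPt x (η x)) (nvec η x) with hb
    have hG2 : G2 = S ^ 2 - 1 := by rw [hs2]; ring
    rw [hG2]
    field_simp
    ring
  · -- part (ii)
    have hgP : gradient pPlus (liftPt x (η x))
        = -(ρPlus • liftPt (0 : EuclideanSpace ℝ (Fin d)) 1)
          - μPlus • uPlus (liftPt x (η x)) := eq_sub_of_add_eq' (hDarcyP x)
    have hgM : gradient pMinus (liftPt x (η x))
        = -(ρMinus • liftPt (0 : EuclideanSpace ℝ (Fin d)) 1)
          - μMinus • uMinus (liftPt x (η x)) := eq_sub_of_add_eq' (hDarcyM x)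
    have key : (inner ℝ (gradient pPlus (liftPt x (η x)) - gradient pMinus (liftPt x (η x)))
          (nvec η x) : ℝ)
        = (ρMinus - ρPlus)
          + (μMinus - μPlus) * (inner ℝ (uMinus (liftPt x (η x))) (nvec η x) : ℝ) := by
      rw [hgP, hgM]
      simp only [inner_sub_left, inner_neg_left, real_inner_smul_left, hEn]
      rw [hun x]; ring
    simp only [RTq]
    rw [key]; ring


end
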